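/- arXiv:1705.05775 — 3 statements merged into one kernel-verified Lean document; each statement's English description precedes it below -/
import Mathlib

section
/- Let q ≥ 1 and r ≥ q be real numbers. For every ε > 0 there exists C(ε) > 0 such that for all real numbers a, b one has | |a+b|^q − |a|^q |^{r/q} ≤ ε |a|^r + C(ε) |b|^r. -/
open Real

/-- Mean-value type inequality from Bernoulli: for `0 ≤ y ≤ x` and `1 ≤ q`,
`x^q - y^q ≤ q * x^(q-1) * (x - y)`. -/
lemma rpow_sub_rpow_le_core (q : ℝ) (hq : 1 ≤ q) {x y : ℝ} (hy : 0 ≤ y) (hyx : y ≤ x) :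
    x ^ q - y ^ q ≤ q * x ^ (q - 1) * (x - y) := by
  rcases eq_or_lt_of_le (hy.trans hyx) with hx | hx
  · have hy0 : y = 0 := le_antisymm (hyx.trans hx.symm.le) hy
    simp [← hx, hy0, Real.zero_rpow (by linarith : q ≠ 0)]
  · have hs : -1 ≤ (y - x) / x := by
      rw [le_div_iff₀ hx]; linarith
    have hB := one_add_mul_self_le_rpow_one_add hs hq
    have h1 : 1 + (y - x) / x = y / x := by field_simp; ring
    rw [h1, Real.div_rpow hy hx.le] at hB
    have hxq : 0 < x ^ q := Real.rpow_pos_of_pos hx q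
    have key : (1 + q * ((y - x) / x)) * x ^ q ≤ y ^ q := (le_div_iff₀ hxq).mp hB
    have hxx : x ^ (q - 1) * x = x ^ q := by
      rw [← Real.rpow_add_one hx.ne']; ring_nf
    have expand : (1 + q * ((y - x) / x)) * x ^ q = x ^ q + q * (y - x) * x ^ (q - 1) := by
      rw [← hxx]; field_simp
    rw [expand] at key
    nlinarith [key]

/-- If `x, y ∈ [0, M]` and `|x - y| ≤ d`, then `|x^q - y^q| ≤ q * M^(q-1) * d`. -/
lemma abs_rpow_sub_rpow_le (q : ℝ) (hq : 1 ≤ q) {x y M d : ℝ} (hx : 0 ≤ x) (hy : 0 ≤ y)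
    (hxM : x ≤ M) (hyM : y ≤ M) (hd : |x - y| ≤ d) :
    |x ^ q - y ^ q| ≤ q * M ^ (q - 1) * d := by
  have hq0 : (0:ℝ) < q := lt_of_lt_of_le one_pos hq
  have hM : 0 ≤ M ^ (q - 1) := Real.rpow_nonneg (hx.trans hxM) _
  have key : ∀ u v : ℝ, 0 ≤ v → v ≤ u → u ≤ M → |u - v| ≤ d →
      u ^ q - v ^ q ≤ q * M ^ (q - 1) * d := by
    intro u v hv hvu huM hduv
    have h1 := rpow_sub_rpow_le_core q hq hv hvu
    have h2 : u ^ (q - 1) ≤ M ^ (q - 1) :=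
      Real.rpow_le_rpow (hv.trans hvu) huM (by linarith)
    have h3 : u - v ≤ d := (le_abs_self _).trans hduv
    have h4 : 0 ≤ u - v := by linarith
    have h5 : 0 ≤ u ^ (q - 1) := Real.rpow_nonneg (hv.trans hvu) _
    calc u ^ q - v ^ q ≤ q * u ^ (q - 1) * (u - v) := h1
      _ ≤ q * M ^ (q - 1) * d := by
          apply mul_le_mul (by nlinarith) h3 h4 (by positivity)
  rcases le_total y x with h | h
  · rw [abs_of_nonneg (by
      have := Real.rpow_le_rpow hy h hq0.le; linarith)]
    exact key x y hy h hxM hd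
  · rw [abs_of_nonpos (by
      have := Real.rpow_le_rpow hx h hq0.le; linarith)]
    rw [abs_sub_comm] at hd
    have := key y x hx h hyM hd
    linarith

/-- For `1 ≤ q ≤ r` and every `ε > 0` there is `C(ε) > 0` such that for all reals `a, b`:
`||a+b|^q - |a|^q|^{r/q} ≤ ε |a|^r + C(ε) |b|^r`. -/
theorem abs_rpow_diff_estimate (q r : ℝ) (hq : 1 ≤ q) (hr : q ≤ r) :
    ∀ ε > (0 : ℝ), ∃ C > (0 : ℝ), ∀ a b : ℝ,
      |(|a + b| ^ q - |a| ^ q)| ^ (r / q) ≤ ε * |a| ^ r + C * |b| ^ r := by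
  intro ε hε
  have hq0 : (0:ℝ) < q := lt_of_lt_of_le one_pos hq
  have hr0 : (0:ℝ) < r := lt_of_lt_of_le hq0 hr
  have hrq1 : 1 ≤ r / q := (one_le_div hq0).mpr hr
  have hrq0 : 0 ≤ r / q := by positivity
  set m : ℝ := min ε 1 with hm_def
  have hm0 : 0 < m := lt_min hε one_pos
  have hm1 : m ≤ 1 := min_le_right _ _
  have hmε : m ≤ ε := min_le_left _ _
  set K : ℝ := q * 2 ^ (q - 1) with hK_def
  have hK1 : 1 ≤ K := by
    have h2 : (1:ℝ) ≤ 2 ^ (q - 1) :=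
      Real.one_le_rpow one_le_two (by linarith)
    nlinarith
  have hK0 : 0 < K := lt_of_lt_of_le one_pos hK1
  set t : ℝ := m / K with ht_def
  have ht0 : 0 < t := div_pos hm0 hK0
  have ht1 : t ≤ 1 := by
    rw [ht_def, div_le_one hK0]; linarith
  have hKt : K * t = m := by
    rw [ht_def]; field_simp
  refine ⟨(1 + 1 / t) ^ r, Real.rpow_pos_of_pos (by positivity) r, fun a b => ?_⟩
  have ha0 : (0:ℝ) ≤ |a| := abs_nonneg a
  have hb0 : (0:ℝ) ≤ |b| := abs_nonneg b
  have hab0 : (0:ℝ) ≤ |a + b| := abs_nonneg _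
  have habs : |(|a + b| - |a|)| ≤ |b| := by
    have := abs_abs_sub_abs_le_abs_sub (a + b) a
    simpa using this
  rcases le_or_gt (t * |a|) |b| with hcase | hcase
  · -- case |b| large: bound by C |b|^r
    set M : ℝ := (1 + 1 / t) * |b| with hM_def
    have hM0 : 0 ≤ M := by positivity
    have hMeq : M = |b| + (1/t) * |b| := by rw [hM_def]; ring
    have ha_le' : |a| ≤ (1/t) * |b| := by
      rw [one_div, ← div_eq_inv_mul, le_div_iff₀ ht0]
      nlinarith
    have ha_le : |a| ≤ M := by
      have : 0 ≤ |b| := hb0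
      linarith [hMeq ▸ le_refl M]
    have hab_le : |a + b| ≤ M := by
      have h1 : |a + b| ≤ |a| + |b| := abs_add_le a b
      linarith [hMeq ▸ le_refl M]
    have hD : |(|a + b| ^ q - |a| ^ q)| ≤ M ^ q := by
      rw [abs_le]
      constructor
      · have h1 : |a| ^ q ≤ M ^ q := Real.rpow_le_rpow ha0 ha_le hq0.le
        have h2 : 0 ≤ |a + b| ^ q := Real.rpow_nonneg hab0 _
        nlinarith
      · have h1 : |a + b| ^ q ≤ M ^ q := Real.rpow_le_rpow hab0 hab_le hq0.le
        have h2 : 0 ≤ |a| ^ q := Real.rpow_nonneg ha0 _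
        nlinarith
    calc |(|a + b| ^ q - |a| ^ q)| ^ (r / q)
        ≤ (M ^ q) ^ (r / q) := Real.rpow_le_rpow (abs_nonneg _) hD hrq0
      _ = M ^ r := by
          rw [← Real.rpow_mul hM0]
          congr 1
          field_simp
      _ = (1 + 1 / t) ^ r * |b| ^ r := Real.mul_rpow (by positivity) hb0
      _ ≤ ε * |a| ^ r + (1 + 1 / t) ^ r * |b| ^ r := by
          have : 0 ≤ ε * |a| ^ r := by positivity
          linarith
  · -- case |b| small: bound by ε |a|^r
    have hD : |(|a + b| ^ q - |a| ^ q)| ≤ m * |a| ^ q := by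
      have hM2 : |a + b| ≤ 2 * |a| := by
        have h1 : |a + b| ≤ |a| + |b| := abs_add_le a b
        nlinarith
      have hM2' : |a| ≤ 2 * |a| := by linarith
      have h := abs_rpow_sub_rpow_le q hq hab0 ha0 hM2 hM2' habs
      have h2 : q * (2 * |a|) ^ (q - 1) * |b| ≤ m * |a| ^ q := by
        rw [Real.mul_rpow (by norm_num) ha0]
        have hb_le : |b| ≤ t * |a| := hcase.le
        have haq : |a| ^ (q - 1) * |a| = |a| ^ q := by
          rcases eq_or_lt_of_le ha0 with ha | ha
          · rw [← ha]
            rw [Real.zero_rpow (by linarith : q ≠ 0),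
              Real.zero_rpow (by intro h; ·  exact absurd h (by intro hh; nlinarith) : q - 1 ≠ 0)]
            ring
          · rw [← Real.rpow_add_one ha.ne']; ring_nf
        have hpow : 0 ≤ |a| ^ (q - 1) := Real.rpow_nonneg ha0 _
        calc q * (2 ^ (q - 1) * |a| ^ (q - 1)) * |b|
            ≤ q * (2 ^ (q - 1) * |a| ^ (q - 1)) * (t * |a|) := by
              apply mul_le_mul_of_nonneg_left hb_le (by positivity)
          _ = (K * t) * (|a| ^ (q - 1) * |a|) := by rw [hK_def]; ring
          _ = m * |a| ^ q := by rw [hKt, haq]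
      linarith
    have h3 : |(|a + b| ^ q - |a| ^ q)| ^ (r / q) ≤ (m * |a| ^ q) ^ (r / q) :=
      Real.rpow_le_rpow (abs_nonneg _) hD hrq0
    have h4 : (m * |a| ^ q) ^ (r / q) = m ^ (r / q) * |a| ^ r := by
      rw [Real.mul_rpow hm0.le (Real.rpow_nonneg ha0 _), ← Real.rpow_mul ha0]
      congr 2
      field_simp
    have h5 : m ^ (r / q) ≤ m := by
      calc m ^ (r / q) ≤ m ^ (1:ℝ) :=
            Real.rpow_le_rpow_of_exponent_ge hm0 hm1 hrq1
        _ = m := Real.rpow_one m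
    have h6 : 0 ≤ |a| ^ r := Real.rpow_nonneg ha0 _
    have h7 : (0:ℝ) ≤ (1 + 1 / t) ^ r * |b| ^ r := by positivity
    calc |(|a + b| ^ q - |a| ^ q)| ^ (r / q) ≤ m ^ (r / q) * |a| ^ r := by rw [← h4]; exact h3
      _ ≤ ε * |a| ^ r := mul_le_mul_of_nonneg_right (h5.trans hmε) h6
      _ ≤ ε * |a| ^ r + (1 + 1 / t) ^ r * |b| ^ r := by linarith
end

section
/- (Local Brezis–Lieb lemma, first form.) Let r ∈ (1,∞) and q ∈ [1, r]. If (w_n) is a sequence bounded in L^r(ℝ^N) that converges almost everywhere to w, then lim_{n→∞} ∫_{ℝ^N} | |w_n|^q − |w_n − w|^q − |w|^q |^{r/q} dx = 0. -/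
open MeasureTheory Real Filter Topology ENNReal

-- tangent line inequality for rpow
lemma bl_tangent {q x y : ℝ} (hq : 1 ≤ q) (hy : 0 ≤ y) (hxy : y ≤ x) :
    x ^ q - y ^ q ≤ q * x ^ (q - 1) * (x - y) := by
  have hx : 0 ≤ x := hy.trans hxy
  rcases eq_or_lt_of_le hx with h | hx0
  · have hx0 : x = 0 := h.symm
    have hy0 : y = 0 := le_antisymm (by rw [hx0] at hxy; exact hxy) hy
    subst hx0 hy0
    simp
  · have hs : (-1 : ℝ) ≤ y / x - 1 := by
      have : 0 ≤ y / x := div_nonneg hy hx0.le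
      linarith
    have hb := one_add_mul_self_le_rpow_one_add hs hq
    have h1 : (1 : ℝ) + (y / x - 1) = y / x := by ring
    rw [h1] at hb
    have hdiv : (y / x) ^ q = y ^ q / x ^ q := Real.div_rpow hy hx0.le q
    rw [hdiv] at hb
    have hxq : 0 < x ^ q := Real.rpow_pos_of_pos hx0 q
    have hb2 : (1 + q * (y / x - 1)) * x ^ q ≤ y ^ q := by
      rw [← le_div_iff₀ hxq]; exact hb
    have hxq1 : x ^ (q - 1) = x ^ q / x := Real.rpow_sub_one hx0.ne' q
    have heq : q * x ^ (q - 1) * (x - y) = q * (1 - y / x) * x ^ q := by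
      rw [hxq1]; field_simp
    rw [heq]
    nlinarith [hxq]

-- Lipschitz-type bound
lemma bl_lip {q x y T : ℝ} (hq : 1 ≤ q) (hx : 0 ≤ x) (hy : 0 ≤ y)
    (hxT : x ≤ T) (hyT : y ≤ T) : |x ^ q - y ^ q| ≤ q * T ^ (q - 1) * |x - y| := by
  have hT : 0 ≤ T := hx.trans hxT
  have key : ∀ a b : ℝ, 0 ≤ b → b ≤ a → a ≤ T → a ^ q - b ^ q ≤ q * T ^ (q - 1) * (a - b) := by
    intro a b hb hba haT
    refine (bl_tangent hq hb hba).trans ?_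
    have h1 : a ^ (q - 1) ≤ T ^ (q - 1) :=
      Real.rpow_le_rpow (hb.trans hba) haT (by linarith)
    have hq0 : (0:ℝ) ≤ q := by linarith
    have hab : (0:ℝ) ≤ a - b := by linarith
    gcongr
  rcases le_total y x with h | h
  · rw [abs_of_nonneg (by linarith : (0:ℝ) ≤ x - y),
      abs_of_nonneg (sub_nonneg.2 (Real.rpow_le_rpow hy h (by linarith)))]
    exact key x y hy h hxT
  · rw [abs_of_nonpos (by linarith : x - y ≤ 0),
      abs_of_nonpos (sub_nonpos.2 (Real.rpow_le_rpow hx h (by linarith)))]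
    have := key y x hx h hyT
    linarith

-- bound on |a+b|^q - |a|^q
lemma bl_abs {q : ℝ} (hq : 1 ≤ q) (a b : ℝ) :
    |(|a + b| ^ q - |a| ^ q)| ≤ q * (|a| + |b|) ^ (q - 1) * |b| := by
  have h1 : |a + b| ≤ |a| + |b| := abs_add_le a b
  have h2 : |a| ≤ |a| + |b| := le_add_of_nonneg_right (abs_nonneg b)
  have h3 := bl_lip hq (abs_nonneg (a+b)) (abs_nonneg a) h1 h2
  refine h3.trans ?_
  have h4 : |(|a + b| - |a|)| ≤ |b| := by
    have := abs_abs_sub_abs_le_abs_sub (a + b) a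
    simpa using this
  have hq0 : (0:ℝ) ≤ q := by linarith
  exact mul_le_mul_of_nonneg_left h4 (by positivity)

lemma bl_helper {q s r K X : ℝ} (t : ℝ) (hs : 0 < s) (hK : 0 ≤ K) (hX0 : 0 ≤ X)
    (hqs : q * s = r) (hX : X ≤ K * |t| ^ q) : X ^ s ≤ K ^ s * |t| ^ r := by
  have h1 : X ^ s ≤ (K * |t| ^ q) ^ s := Real.rpow_le_rpow hX0 hX hs.le
  refine h1.trans_eq ?_
  rw [Real.mul_rpow hK (Real.rpow_nonneg (abs_nonneg t) q),
    ← Real.rpow_mul (abs_nonneg t), hqs]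

lemma bl_eps {q r : ℝ} (hq : 1 ≤ q) (hqr : q ≤ r) {ε : ℝ} (hε : 0 < ε) :
    ∃ C : ℝ, 0 ≤ C ∧ ∀ a b : ℝ,
      |(|a + b| ^ q - |a| ^ q)| ^ (r / q) ≤ ε * |a| ^ r + C * |b| ^ r := by
  have hq0 : (0:ℝ) < q := lt_of_lt_of_le one_pos hq
  set s := r / q with hs_def
  have hs1 : 1 ≤ s := (one_le_div hq0).2 hqr
  have hs : 0 < s := lt_of_lt_of_le one_pos hs1
  have hqs : q * s = r := by rw [hs_def]; field_simp [hq0.ne']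
  have h2q : (0:ℝ) < q * 2 ^ (q - 1) := by positivity
  set δ := min 1 (ε ^ s⁻¹ / (q * 2 ^ (q - 1))) with hδ_def
  have hδ0 : 0 < δ := lt_min one_pos (by positivity)
  have hδ1 : δ ≤ 1 := min_le_left _ _
  set K1 := q * 2 ^ (q - 1) * δ with hK1_def
  have hK1ε : K1 ^ s ≤ ε := by
    have h1 : K1 ≤ ε ^ s⁻¹ := by
      have := min_le_right 1 (ε ^ s⁻¹ / (q * 2 ^ (q - 1)))
      rw [hK1_def]
      calc q * 2 ^ (q - 1) * δ ≤ q * 2 ^ (q - 1) * (ε ^ s⁻¹ / (q * 2 ^ (q - 1))) := by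
            exact mul_le_mul_of_nonneg_left this h2q.le
        _ = ε ^ s⁻¹ := by field_simp
    calc K1 ^ s ≤ (ε ^ s⁻¹) ^ s := Real.rpow_le_rpow (by positivity) h1 hs.le
      _ = ε := Real.rpow_inv_rpow hε.le hs.ne'
  set K2 := q * (1 + 1/δ) ^ (q - 1) with hK2_def
  refine ⟨K2 ^ s, by positivity, fun a b => ?_⟩
  have hX0 : (0:ℝ) ≤ |(|a + b| ^ q - |a| ^ q)| := abs_nonneg _
  have hB := bl_abs hq a b
  rcases le_total (|b|) (δ * |a|) with hcase | hcase
  · -- small b case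
    have hab2 : |a| + |b| ≤ 2 * |a| := by nlinarith [abs_nonneg a, abs_nonneg b]
    have hXa : |(|a + b| ^ q - |a| ^ q)| ≤ K1 * |a| ^ q := by
      refine hB.trans ?_
      have h1 : (|a| + |b|) ^ (q - 1) ≤ (2 * |a|) ^ (q - 1) :=
        Real.rpow_le_rpow (by positivity) hab2 (by linarith)
      have h2 : (2 * |a|) ^ (q - 1) = 2 ^ (q - 1) * |a| ^ (q - 1) :=
        Real.mul_rpow (by norm_num) (abs_nonneg a)
      have hq1' : q - 1 + 1 = q := by ring
      have h3 : |a| ^ (q - 1) * |a| = |a| ^ q := by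
        calc |a| ^ (q-1) * |a| = |a| ^ (q-1) * |a| ^ (1:ℝ) := by rw [Real.rpow_one]
          _ = |a| ^ (q-1+1) := (Real.rpow_add' (abs_nonneg a) (by rw [hq1']; exact hq0.ne')).symm
          _ = |a| ^ q := by rw [hq1']
      calc q * (|a| + |b|) ^ (q - 1) * |b| ≤ q * (2 * |a|) ^ (q - 1) * (δ * |a|) :=
            mul_le_mul (mul_le_mul_of_nonneg_left h1 hq0.le) hcase (abs_nonneg b)
              (by positivity)
        _ = K1 * |a| ^ q := by rw [hK1_def, h2, ← h3]; ring
    have := bl_helper a hs (by positivity : (0:ℝ) ≤ K1) hX0 hqs hXa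
    have hrb : 0 ≤ K2 ^ s * |b| ^ r := by positivity
    calc |(|a + b| ^ q - |a| ^ q)| ^ s ≤ K1 ^ s * |a| ^ r := this
      _ ≤ ε * |a| ^ r := mul_le_mul_of_nonneg_right hK1ε (Real.rpow_nonneg (abs_nonneg a) r)
      _ ≤ ε * |a| ^ r + K2 ^ s * |b| ^ r := le_add_of_nonneg_right hrb
  · -- large b case
    have hab2 : |a| + |b| ≤ (1 + 1/δ) * |b| := by
      have h1 : |a| ≤ |b| / δ := (le_div_iff₀ hδ0).2 (by linarith [hcase])
      have : |b| / δ = (1/δ) * |b| := by ring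
      nlinarith [abs_nonneg b]
    have hXb : |(|a + b| ^ q - |a| ^ q)| ≤ K2 * |b| ^ q := by
      refine hB.trans ?_
      have h1 : (|a| + |b|) ^ (q - 1) ≤ ((1 + 1/δ) * |b|) ^ (q - 1) :=
        Real.rpow_le_rpow (by positivity) hab2 (by linarith)
      have h2 : ((1 + 1/δ) * |b|) ^ (q - 1) = (1 + 1/δ) ^ (q - 1) * |b| ^ (q - 1) :=
        Real.mul_rpow (by positivity) (abs_nonneg b)
      have hq1' : q - 1 + 1 = q := by ring
      have h3 : |b| ^ (q - 1) * |b| = |b| ^ q := by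
        calc |b| ^ (q-1) * |b| = |b| ^ (q-1) * |b| ^ (1:ℝ) := by rw [Real.rpow_one]
          _ = |b| ^ (q-1+1) := (Real.rpow_add' (abs_nonneg b) (by rw [hq1']; exact hq0.ne')).symm
          _ = |b| ^ q := by rw [hq1']
      calc q * (|a| + |b|) ^ (q - 1) * |b| ≤ q * ((1 + 1/δ) * |b|) ^ (q - 1) * |b| :=
            mul_le_mul_of_nonneg_right (mul_le_mul_of_nonneg_left h1 hq0.le) (abs_nonneg b)
        _ = K2 * |b| ^ q := by rw [hK2_def, h2, ← h3]; ring
    have := bl_helper b hs (by positivity : (0:ℝ) ≤ K2) hX0 hqs hXb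
    have hra : 0 ≤ ε * |a| ^ r := by positivity
    calc |(|a + b| ^ q - |a| ^ q)| ^ s ≤ K2 ^ s * |b| ^ r := this
      _ ≤ ε * |a| ^ r + K2 ^ s * |b| ^ r := le_add_of_nonneg_left hra

lemma bl_eps_full {q r : ℝ} (hq : 1 ≤ q) (hqr : q ≤ r) {ε : ℝ} (hε : 0 < ε) :
    ∃ C : ℝ, 0 ≤ C ∧ ∀ a b : ℝ,
      |(|a + b| ^ q - |a| ^ q - |b| ^ q)| ^ (r / q) ≤ ε * |a| ^ r + C * |b| ^ r := by
  have hq0 : (0:ℝ) < q := lt_of_lt_of_le one_pos hq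
  set s := r / q with hs_def
  have hs1 : 1 ≤ s := (one_le_div hq0).2 hqr
  have hs : 0 < s := lt_of_lt_of_le one_pos hs1
  have hqs : q * s = r := by rw [hs_def]; field_simp [hq0.ne']
  have h2s : (0:ℝ) < 2 ^ s := by positivity
  obtain ⟨C', hC'0, hC'⟩ := bl_eps hq hqr (show (0:ℝ) < ε / 2 ^ s by positivity)
  refine ⟨2 ^ s * (C' + 1), by positivity, fun a b => ?_⟩
  set X := |(|a + b| ^ q - |a| ^ q)| with hX_def
  set Y := |b| ^ q with hY_def
  have hX0 : 0 ≤ X := abs_nonneg _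
  have hY0 : 0 ≤ Y := Real.rpow_nonneg (abs_nonneg b) q
  have hZ : |(|a + b| ^ q - |a| ^ q - |b| ^ q)| ≤ X + Y := by
    have := abs_sub (|a + b| ^ q - |a| ^ q) (|b| ^ q)
    rw [hX_def, hY_def, abs_of_nonneg (Real.rpow_nonneg (abs_nonneg b) q)] at *
    exact this
  have hmax : X + Y ≤ 2 * max X Y := by
    rcases le_total X Y with h | h
    · rw [max_eq_right h]; linarith
    · rw [max_eq_left h]; linarith
  have hmax0 : 0 ≤ max X Y := le_max_of_le_left hX0
  have hmaxs : (max X Y) ^ s ≤ X ^ s + Y ^ s := by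
    rcases le_total X Y with h | h
    · rw [max_eq_right h]
      exact le_add_of_nonneg_left (Real.rpow_nonneg hX0 s)
    · rw [max_eq_left h]
      exact le_add_of_nonneg_right (Real.rpow_nonneg hY0 s)
  have hYs : Y ^ s = |b| ^ r := by
    rw [hY_def, ← Real.rpow_mul (abs_nonneg b), hqs]
  calc |(|a + b| ^ q - |a| ^ q - |b| ^ q)| ^ s
      ≤ (X + Y) ^ s := Real.rpow_le_rpow (abs_nonneg _) hZ hs.le
    _ ≤ (2 * max X Y) ^ s := Real.rpow_le_rpow (by positivity) hmax hs.le
    _ = 2 ^ s * (max X Y) ^ s := Real.mul_rpow (by norm_num) hmax0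
    _ ≤ 2 ^ s * (X ^ s + Y ^ s) := mul_le_mul_of_nonneg_left hmaxs h2s.le
    _ ≤ 2 ^ s * ((ε / 2 ^ s * |a| ^ r + C' * |b| ^ r) + |b| ^ r) := by
        have h1 := hC' a b
        rw [hYs]
        have h2 : 0 ≤ |b| ^ r := Real.rpow_nonneg (abs_nonneg b) r
        have : X ^ s ≤ ε / 2 ^ s * |a| ^ r + C' * |b| ^ r := h1
        nlinarith
    _ = ε * |a| ^ r + 2 ^ s * (C' + 1) * |b| ^ r := by field_simp; ring

noncomputable section

abbrev Sp (N : ℕ) := EuclideanSpace ℝ (Fin N)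

/-- Local Brezis–Lieb lemma, first form. -/
theorem local_brezis_lieb_first
    (N : ℕ) (hN : 1 ≤ N) (r q : ℝ) (hr1 : 1 < r) (hq1 : 1 ≤ q) (hqr : q ≤ r)
    (w : ℕ → Sp N → ℝ) (wlim : Sp N → ℝ)
    (hmeas : ∀ n, AEStronglyMeasurable (w n) (volume : Measure (Sp N)))
    (hbdd : ∃ C : ℝ≥0∞, C < ⊤ ∧ ∀ n, eLpNorm (w n) (ENNReal.ofReal r) volume ≤ C)
    (hae : ∀ᵐ x ∂(volume : Measure (Sp N)), Tendsto (fun n => w n x) atTop (nhds (wlim x))) :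
    Tendsto
      (fun n => ∫ x, |(|w n x| ^ q - |w n x - wlim x| ^ q - |wlim x| ^ q)| ^ (r / q))
      atTop (nhds 0) := by
  have hq0 : (0:ℝ) < q := lt_of_lt_of_le one_pos hq1
  have hr0 : (0:ℝ) < r := lt_trans one_pos hr1
  have hs : 0 < r / q := div_pos hr0 hq0
  have cont : ∀ c : ℝ, 0 < c → Continuous (fun t : ℝ => |t| ^ c) := fun c hc =>
    (continuous_iff_continuousAt.2 fun x =>
      Real.continuousAt_rpow_const x c (Or.inr hc.le)).comp continuous_abs
  obtain ⟨C, hCtop, hCb⟩ := hbdd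
  set p := ENNReal.ofReal r with hp_def
  have hp0 : p ≠ 0 := (ENNReal.ofReal_pos.2 hr0).ne'
  have hptop : p ≠ ⊤ := ENNReal.ofReal_ne_top
  have hp1 : 1 ≤ p := ENNReal.one_le_ofReal.2 hr1.le
  have hpt : p.toReal = r := ENNReal.toReal_ofReal hr0.le
  have hwlm : AEStronglyMeasurable wlim (volume : Measure (Sp N)) :=
    aestronglyMeasurable_of_tendsto_ae atTop hmeas hae
  have hwlimC : eLpNorm wlim p volume ≤ C :=
    (Lp.eLpNorm_lim_le_liminf_eLpNorm hmeas wlim hae).trans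
      (Filter.liminf_le_of_frequently_le' (Filter.Frequently.of_forall hCb))
  have hmem : ∀ n, MemLp (w n) p (volume : Measure (Sp N)) := fun n =>
    ⟨hmeas n, lt_of_le_of_lt (hCb n) hCtop⟩
  have hmemw : MemLp wlim p (volume : Measure (Sp N)) := ⟨hwlm, lt_of_le_of_lt hwlimC hCtop⟩
  have hmemd : ∀ n, MemLp (fun x => w n x - wlim x) p (volume : Measure (Sp N)) := fun n =>
    (hmem n).sub hmemw
  have hint_w : Integrable (fun x => |wlim x| ^ r) (volume : Measure (Sp N)) := by
    have := hmemw.integrable_norm_rpow hp0 hptop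
    simpa [hpt, Real.norm_eq_abs] using this
  have hint_d : ∀ n, Integrable (fun x => |w n x - wlim x| ^ r) (volume : Measure (Sp N)) := by
    intro n
    have := (hmemd n).integrable_norm_rpow hp0 hptop
    simpa [hpt, Real.norm_eq_abs] using this
  set M := ((C + C).toReal) ^ r with hM_def
  have hM0 : 0 ≤ M := Real.rpow_nonneg ENNReal.toReal_nonneg r
  have hMb : ∀ n, ∫ x, |w n x - wlim x| ^ r ≤ M := by
    intro n
    have htri : eLpNorm (fun x => w n x - wlim x) p volume ≤ C + C :=
      (eLpNorm_sub_le (hmeas n) hwlm hp1).trans (add_le_add (hCb n) hwlimC)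
    have heq := (hmemd n).eLpNorm_eq_integral_rpow_norm hp0 hptop
    rw [heq, hpt] at htri
    set I := ∫ x, ‖w n x - wlim x‖ ^ r with hI_def
    have hI0 : 0 ≤ I := integral_nonneg fun x => Real.rpow_nonneg (norm_nonneg _) r
    have h1 : I ^ r⁻¹ ≤ (C + C).toReal := by
      rw [ENNReal.ofReal_le_iff_le_toReal (ENNReal.add_lt_top.2 ⟨hCtop, hCtop⟩).ne] at htri
      exact htri
    have h2 : I = (I ^ r⁻¹) ^ r := (Real.rpow_inv_rpow hI0 hr0.ne').symm
    calc ∫ x, |w n x - wlim x| ^ r = I := by simp [hI_def, Real.norm_eq_abs]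
      _ = (I ^ r⁻¹) ^ r := h2
      _ ≤ M := Real.rpow_le_rpow (Real.rpow_nonneg hI0 _) h1 hr0.le
  set F := fun (n : ℕ) (x : Sp N) =>
    |(|w n x| ^ q - |w n x - wlim x| ^ q - |wlim x| ^ q)| ^ (r / q) with hF_def
  have hF0 : ∀ n x, 0 ≤ F n x := fun n x => Real.rpow_nonneg (abs_nonneg _) _
  have hFmeas : ∀ n, AEStronglyMeasurable (F n) (volume : Measure (Sp N)) := by
    intro n
    have hU : AEStronglyMeasurable
        (fun x => |w n x| ^ q - |w n x - wlim x| ^ q - |wlim x| ^ q)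
        (volume : Measure (Sp N)) :=
      (((cont q hq0).comp_aestronglyMeasurable (hmeas n)).sub
        ((cont q hq0).comp_aestronglyMeasurable ((hmeas n).sub hwlm))).sub
        ((cont q hq0).comp_aestronglyMeasurable hwlm)
    exact (cont (r/q) hs).comp_aestronglyMeasurable hU
  have hFtend : ∀ᵐ x ∂(volume : Measure (Sp N)), Tendsto (fun n => F n x) atTop (𝓝 0) := by
    filter_upwards [hae] with x hx
    have h1 : Tendsto (fun n => |w n x| ^ q) atTop (𝓝 (|wlim x| ^ q)) :=
      ((cont q hq0).tendsto _).comp hx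
    have h2 : Tendsto (fun n => |w n x - wlim x| ^ q) atTop (𝓝 (|(0:ℝ)| ^ q)) :=
      ((cont q hq0).tendsto _).comp (by simpa using hx.sub (tendsto_const_nhds : Tendsto (fun _ : ℕ => wlim x) atTop (𝓝 (wlim x))))
    rw [abs_zero, Real.zero_rpow hq0.ne'] at h2
    have h3 : Tendsto (fun n => |w n x| ^ q - |w n x - wlim x| ^ q - |wlim x| ^ q) atTop
        (𝓝 (|wlim x| ^ q - 0 - |wlim x| ^ q)) := (h1.sub h2).sub tendsto_const_nhds
    have h4 := ((cont (r/q) hs).tendsto _).comp h3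
    simpa [Real.zero_rpow hs.ne', Function.comp_def, hF_def] using h4
  have hDtend : ∀ᵐ x ∂(volume : Measure (Sp N)),
      Tendsto (fun n => |w n x - wlim x| ^ r) atTop (𝓝 0) := by
    filter_upwards [hae] with x hx
    have h2 : Tendsto (fun n => |w n x - wlim x| ^ r) atTop (𝓝 (|(0:ℝ)| ^ r)) :=
      ((cont r hr0).tendsto _).comp (by simpa using hx.sub (tendsto_const_nhds : Tendsto (fun _ : ℕ => wlim x) atTop (𝓝 (wlim x))))
    simpa [Real.zero_rpow hr0.ne'] using h2
  rw [Metric.tendsto_atTop]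
  intro ε hε
  have hε' : 0 < ε / (2 * (M + 1)) := by positivity
  obtain ⟨Cp, hCp0, hCp⟩ := bl_eps_full hq1 hqr hε'
  set ε' := ε / (2 * (M + 1)) with hε'_def
  have hFle : ∀ n x, F n x ≤ ε' * |w n x - wlim x| ^ r + Cp * |wlim x| ^ r := by
    intro n x
    have h := hCp (w n x - wlim x) (wlim x)
    rw [sub_add_cancel] at h
    exact h
  have hFint : ∀ n, Integrable (F n) (volume : Measure (Sp N)) := fun n =>
    Integrable.mono' (((hint_d n).const_mul ε').add (hint_w.const_mul Cp)) (hFmeas n)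
      (ae_of_all _ fun x => by
        rw [Real.norm_eq_abs, abs_of_nonneg (hF0 n x)]; exact hFle n x)
  set g := fun (n : ℕ) (x : Sp N) => max (F n x - ε' * |w n x - wlim x| ^ r) 0 with hg_def
  have hgmeas : ∀ n, AEStronglyMeasurable (g n) (volume : Measure (Sp N)) := fun n =>
    ((hFmeas n).sub ((hint_d n).aestronglyMeasurable.const_mul ε')).sup
      aestronglyMeasurable_const
  have hg0 : ∀ n x, 0 ≤ g n x := fun n x => le_max_right _ _
  have hgle : ∀ n x, g n x ≤ Cp * |wlim x| ^ r := fun n x =>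
    max_le (by have := hFle n x; linarith) (by positivity)
  have hgbd : Integrable (fun x => Cp * |wlim x| ^ r) (volume : Measure (Sp N)) :=
    hint_w.const_mul Cp
  have hgtend : ∀ᵐ x ∂(volume : Measure (Sp N)), Tendsto (fun n => g n x) atTop (𝓝 0) := by
    filter_upwards [hFtend, hDtend] with x h1 h2
    have h3 : Tendsto (fun n => F n x - ε' * |w n x - wlim x| ^ r) atTop
        (𝓝 (0 - ε' * 0)) := h1.sub (h2.const_mul ε')
    have h4 := h3.max (tendsto_const_nhds : Tendsto (fun _ : ℕ => (0:ℝ)) atTop (𝓝 0))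
    simpa using h4
  have hgI : Tendsto (fun n => ∫ x, g n x) atTop (𝓝 (∫ _ : Sp N, (0:ℝ))) :=
    tendsto_integral_of_dominated_convergence _ hgmeas hgbd
      (fun n => ae_of_all _ fun x => by
        rw [Real.norm_eq_abs, abs_of_nonneg (hg0 n x)]; exact hgle n x)
      hgtend
  rw [integral_zero] at hgI
  rw [Metric.tendsto_atTop] at hgI
  obtain ⟨Nn, hNn⟩ := hgI (ε/2) (half_pos hε)
  refine ⟨Nn, fun n hn => ?_⟩
  have hIg : ∫ x, g n x < ε/2 := by
    have := hNn n hn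
    rw [Real.dist_eq, sub_zero] at this
    exact lt_of_abs_lt this
  have hgint : Integrable (g n) (volume : Measure (Sp N)) :=
    Integrable.mono' hgbd (hgmeas n)
      (ae_of_all _ fun x => by
        rw [Real.norm_eq_abs, abs_of_nonneg (hg0 n x)]; exact hgle n x)
  have hFg : ∀ x, F n x ≤ g n x + ε' * |w n x - wlim x| ^ r := by
    intro x
    have := le_max_left (F n x - ε' * |w n x - wlim x| ^ r) 0
    have h2 : F n x - ε' * |w n x - wlim x| ^ r ≤ g n x := this
    linarith
  have hIF : ∫ x, F n x ≤ (∫ x, g n x) + ε' * ∫ x, |w n x - wlim x| ^ r := by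
    have h1 : ∫ x, F n x ≤ ∫ x, (g n x + ε' * |w n x - wlim x| ^ r) :=
      integral_mono (hFint n) (hgint.add ((hint_d n).const_mul ε')) hFg
    rwa [integral_add hgint ((hint_d n).const_mul ε'), integral_const_mul] at h1
  have hεM : ε' * M ≤ ε/2 := by
    rw [hε'_def, div_mul_eq_mul_div, div_le_div_iff₀ (by positivity) two_pos]
    nlinarith
  have hd : ε' * ∫ x, |w n x - wlim x| ^ r ≤ ε' * M :=
    mul_le_mul_of_nonneg_left (hMb n) hε'.le
  rw [Real.dist_eq, sub_zero, abs_of_nonneg (integral_nonneg (hF0 n))]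
  calc ∫ x, F n x ≤ (∫ x, g n x) + ε' * ∫ x, |w n x - wlim x| ^ r := hIF
    _ < ε/2 + ε/2 := by linarith
    _ = ε := by ring
end
end

section
/- (Local Brezis–Lieb lemma, second form.) Let r ∈ (1,∞) and q ∈ [1, r]. If (w_n) is a sequence bounded in L^r(ℝ^N) that converges almost everywhere to w, then lim_{n→∞} ∫_{ℝ^N} | |w_n|^{q−1} w_n − |w_n − w|^{q−1} (w_n − w) − |w|^{q−1} w |^{r/q} dx = 0. -/
open MeasureTheory Real Filter Topology ENNReal

noncomputable section

namespace BLaux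

noncomputable def phi (q t : ℝ) : ℝ := |t| ^ (q - 1) * t

lemma phi_zero (q : ℝ) : phi q 0 = 0 := by simp [phi]

lemma abs_phi (q : ℝ) (hq : 1 ≤ q) (t : ℝ) : |phi q t| = |t| ^ q := by
  rcases eq_or_ne t 0 with rfl | ht
  · simp [phi, Real.zero_rpow (by linarith : q ≠ 0)]
  · rw [phi, abs_mul, abs_rpow_of_nonneg (abs_nonneg t), abs_abs,
      ← Real.rpow_add_one (abs_ne_zero.2 ht), sub_add_cancel]

lemma continuous_phi (q : ℝ) (hq : 1 ≤ q) : Continuous (phi q) :=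
  ((Real.continuous_rpow_const (by linarith : (0:ℝ) ≤ q - 1)).comp continuous_abs).mul
    continuous_id

lemma phi_hasDerivAt {q : ℝ} (hq : 1 < q) (t : ℝ) :
    HasDerivAt (phi q) (q * |t| ^ (q - 1)) t := by
  rcases lt_trichotomy t 0 with ht | rfl | ht
  · have h1 : HasDerivAt (fun s : ℝ => -((-s) ^ q)) (q * (-t) ^ (q - 1)) t := by
      have : HasDerivAt (fun s : ℝ => -((-s) ^ q)) (-(-1 * q * (-t) ^ (q - 1))) t :=
        ((hasDerivAt_neg t).rpow_const (p := q) (Or.inr hq.le)).neg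
      convert this using 1
      ring
    have h2 : (fun s : ℝ => -((-s) ^ q)) =ᶠ[𝓝 t] phi q := by
      filter_upwards [eventually_lt_nhds ht] with s hs
      have hns : (-s : ℝ) ≠ 0 := ne_of_gt (neg_pos.2 hs)
      have e : (-s : ℝ) ^ q = (-s) ^ (q - 1) * (-s) := by
        rw [← Real.rpow_add_one hns, sub_add_cancel]
      rw [phi, abs_of_neg hs, e]; ring
    have := h1.congr_of_eventuallyEq h2.symm
    rwa [abs_of_neg ht]
  · rw [abs_zero, Real.zero_rpow (by linarith : q - 1 ≠ 0), mul_zero]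
    rw [hasDerivAt_iff_tendsto_slope]
    have hc : Tendsto (fun s : ℝ => |s| ^ (q - 1)) (𝓝[≠] (0:ℝ)) (𝓝 0) := by
      have : Tendsto (fun s : ℝ => |s| ^ (q - 1)) (𝓝 (0:ℝ)) (𝓝 (|0| ^ (q-1))) :=
        ((Real.continuous_rpow_const (by linarith : (0:ℝ) ≤ q - 1)).comp
          continuous_abs).continuousAt
      simpa [Real.zero_rpow (by linarith : q - 1 ≠ 0)] using this.mono_left nhdsWithin_le_nhds
    refine hc.congr' ?_
    filter_upwards [self_mem_nhdsWithin] with s hs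
    have hs' : (s : ℝ) ≠ 0 := hs
    simp only [slope_def_field, phi, abs_zero, mul_zero, sub_zero, div_eq_mul_inv]
    rw [mul_assoc, mul_inv_cancel₀ hs', mul_one]
  · have h1 : HasDerivAt (fun s : ℝ => s ^ q) (q * t ^ (q - 1)) t :=
      Real.hasDerivAt_rpow_const (Or.inl (ne_of_gt ht))
    have h2 : (fun s : ℝ => s ^ q) =ᶠ[𝓝 t] phi q := by
      filter_upwards [eventually_gt_nhds ht] with s hs
      rw [phi, abs_of_pos hs, ← Real.rpow_add_one (ne_of_gt hs), sub_add_cancel]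
    have := h1.congr_of_eventuallyEq h2.symm
    rwa [abs_of_pos ht]

end BLaux

namespace BLaux2
open BLaux

lemma phi_sub_le {q : ℝ} (hq : 1 ≤ q) (a b : ℝ) :
    |phi q (a + b) - phi q a| ≤ q * (|a| + |b|) ^ (q - 1) * |b| := by
  rcases eq_or_lt_of_le hq with h1 | h1
  · have : phi q = fun t => t := by
      funext t; rw [phi, ← h1]; simp
    rw [this]
    simp only [add_sub_cancel_left, ← h1, sub_self, Real.rpow_zero, one_mul]
    exact le_rfl
  · have hq1 : (0:ℝ) ≤ q - 1 := by linarith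
    have bound : ∀ x ∈ Set.uIcc a (a + b),
        ‖q * |x| ^ (q - 1)‖ ≤ q * (|a| + |b|) ^ (q - 1) := by
      intro x hx
      have hxle : |x| ≤ |a| + |b| := by
        have h2 : |x| ≤ max |a| |a + b| := by
          rcases Set.mem_uIcc.1 hx with ⟨u1, u2⟩ | ⟨u1, u2⟩
          · exact abs_le_max_abs_abs u1 u2
          · exact (abs_le_max_abs_abs u1 u2).trans (by rw [max_comm])
        exact h2.trans (max_le (le_add_of_nonneg_right (abs_nonneg b))
          ((abs_add_le a b)))
      have h3 : |x| ^ (q - 1) ≤ (|a| + |b|) ^ (q - 1) :=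
        Real.rpow_le_rpow (abs_nonneg x) hxle hq1
      rw [Real.norm_eq_abs, abs_of_nonneg (by positivity)]
      exact mul_le_mul_of_nonneg_left h3 (by linarith)
    have key := (convex_uIcc a (a + b)).norm_image_sub_le_of_norm_hasDerivWithin_le
      (fun x _ => (phi_hasDerivAt h1 x).hasDerivWithinAt) bound
      Set.left_mem_uIcc Set.right_mem_uIcc
    simpa [Real.norm_eq_abs, add_sub_cancel_left] using key

lemma phi_key {q : ℝ} (hq : 1 ≤ q) {ε : ℝ} (hε : 0 < ε) :
    ∃ C : ℝ, 0 < C ∧ ∀ a b : ℝ, |phi q (a + b) - phi q a| ≤ ε * |a| ^ q + C * |b| ^ q := by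
  have hq0 : (0:ℝ) < q := by linarith
  have h2pos : (0:ℝ) < q * 2 ^ (q - 1) := by positivity
  set δ : ℝ := min 1 (ε / (q * 2 ^ (q - 1))) with hδdef
  have hδpos : 0 < δ := lt_min one_pos (div_pos hε h2pos)
  have hδ1 : δ ≤ 1 := min_le_left _ _
  refine ⟨(1/δ + 1) ^ q + (1/δ) ^ q, by positivity, fun a b => ?_⟩
  by_cases hb : |b| ≤ δ * |a|
  · rcases eq_or_ne a 0 with rfl | ha
    · have hb0 : b = 0 := by
        have := hb; simp at this
        exact abs_eq_zero.1 (le_antisymm (by simpa using hb) (abs_nonneg b))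
      simp [hb0, phi_zero]
      positivity
    have ha' : (0:ℝ) < |a| := abs_pos.2 ha
    have step1 := phi_sub_le hq a b
    have step2 : q * (|a| + |b|) ^ (q - 1) * |b| ≤ q * ((1 + δ) * |a|) ^ (q - 1) * (δ * |a|) := by
      have e1 : |a| + |b| ≤ (1 + δ) * |a| := by nlinarith [abs_nonneg a, abs_nonneg b]
      have e2 : (|a| + |b|) ^ (q - 1) ≤ ((1 + δ) * |a|) ^ (q - 1) :=
        Real.rpow_le_rpow (by positivity) e1 (by linarith)
      apply mul_le_mul
      · exact mul_le_mul_of_nonneg_left e2 (by linarith)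
      · exact hb
      · exact abs_nonneg b
      · positivity
    have step3 : q * ((1 + δ) * |a|) ^ (q - 1) * (δ * |a|)
        = (q * (1 + δ) ^ (q - 1) * δ) * |a| ^ q := by
      rw [Real.mul_rpow (by linarith) (abs_nonneg a)]
      have : |a| ^ (q - 1) * |a| = |a| ^ q := by
        rw [← Real.rpow_add_one (ne_of_gt ha'), sub_add_cancel]
      rw [← this]; ring
    have step4 : q * (1 + δ) ^ (q - 1) * δ ≤ ε := by
      have e3 : (1 + δ) ^ (q - 1) ≤ 2 ^ (q - 1) :=
        Real.rpow_le_rpow (by linarith) (by linarith) (by linarith)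
      have e4 : δ ≤ ε / (q * 2 ^ (q - 1)) := min_le_right _ _
      have e5 : q * (1 + δ) ^ (q - 1) * δ ≤ q * 2 ^ (q - 1) * δ := by
        apply mul_le_mul_of_nonneg_right _ hδpos.le
        exact mul_le_mul_of_nonneg_left e3 (by linarith)
      calc q * (1 + δ) ^ (q - 1) * δ ≤ q * 2 ^ (q - 1) * δ := e5
        _ ≤ q * 2 ^ (q - 1) * (ε / (q * 2 ^ (q - 1))) := mul_le_mul_of_nonneg_left e4 h2pos.le
        _ = ε := by field_simp
    calc |phi q (a + b) - phi q a| ≤ q * ((1 + δ) * |a|) ^ (q - 1) * (δ * |a|) :=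
          step1.trans step2
      _ = (q * (1 + δ) ^ (q - 1) * δ) * |a| ^ q := step3
      _ ≤ ε * |a| ^ q := mul_le_mul_of_nonneg_right step4 (by positivity)
      _ ≤ ε * |a| ^ q + ((1/δ + 1) ^ q + (1/δ) ^ q) * |b| ^ q := by
          have : (0:ℝ) ≤ ((1/δ + 1) ^ q + (1/δ) ^ q) * |b| ^ q := by positivity
          linarith
  · push_neg at hb
    have ha : |a| ≤ (1/δ) * |b| := by
      rw [one_div, inv_mul_eq_div, le_div_iff₀ hδpos]
      nlinarith
    have e1 : |phi q (a + b) - phi q a| ≤ |a + b| ^ q + |a| ^ q := by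
      calc |phi q (a + b) - phi q a| ≤ |phi q (a + b)| + |phi q a| := abs_sub _ _
        _ = |a + b| ^ q + |a| ^ q := by rw [abs_phi q hq, abs_phi q hq]
    have e2 : |a + b| ^ q ≤ ((1/δ + 1) * |b|) ^ q := by
      apply Real.rpow_le_rpow (abs_nonneg _) _ hq0.le
      calc |a + b| ≤ |a| + |b| := abs_add_le a b
        _ ≤ (1/δ) * |b| + 1 * |b| := by linarith
        _ = (1/δ + 1) * |b| := by ring
    have e3 : |a| ^ q ≤ ((1/δ) * |b|) ^ q :=
      Real.rpow_le_rpow (abs_nonneg _) ha hq0.le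
    have e4 : ((1/δ + 1) * |b|) ^ q = (1/δ + 1) ^ q * |b| ^ q :=
      Real.mul_rpow (by positivity) (abs_nonneg b)
    have e5 : ((1/δ) * |b|) ^ q = (1/δ) ^ q * |b| ^ q :=
      Real.mul_rpow (by positivity) (abs_nonneg b)
    have : (0:ℝ) ≤ ε * |a| ^ q := by positivity
    nlinarith [e1, e2, e3]

end BLaux2

namespace BLaux3
open BLaux BLaux2

lemma add_rpow_le {p x y : ℝ} (hp : 0 ≤ p) (hx : 0 ≤ x) (hy : 0 ≤ y) :
    (x + y) ^ p ≤ 2 ^ p * (x ^ p + y ^ p) := by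
  have h1 : x + y ≤ 2 * max x y := by
    rcases le_total x y with h | h
    · rw [max_eq_right h]; linarith
    · rw [max_eq_left h]; linarith
  calc (x + y) ^ p ≤ (2 * max x y) ^ p :=
        Real.rpow_le_rpow (by positivity) h1 hp
    _ = 2 ^ p * (max x y) ^ p := Real.mul_rpow (by norm_num) (le_max_of_le_left hx)
    _ ≤ 2 ^ p * (x ^ p + y ^ p) := by
        apply mul_le_mul_of_nonneg_left _ (by positivity)
        rcases max_cases x y with ⟨h, _⟩ | ⟨h, _⟩ <;> rw [h]
        · linarith [Real.rpow_nonneg hy p]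
        · linarith [Real.rpow_nonneg hx p]

lemma pointwise_dom {q r : ℝ} (hq : 1 ≤ q) (hqr : q ≤ r) {ε : ℝ} (hε : 0 < ε) :
    ∃ D : ℝ, 0 < D ∧ ∀ a c : ℝ,
      |phi q a - phi q (a - c) - phi q c| ^ (r / q) ≤ ε * |a - c| ^ r + D * |c| ^ r := by
  have hq0 : (0:ℝ) < q := by linarith
  have hp1 : 1 ≤ r / q := (one_le_div hq0).2 hqr
  have hp0 : (0:ℝ) < r / q := by linarith
  set p := r / q with hp
  have h2p : (0:ℝ) < 2 ^ p := by positivity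
  set ε₁ : ℝ := (ε / 2 ^ p) ^ (1 / p) with hε₁
  have hε₁pos : 0 < ε₁ := by positivity
  obtain ⟨C, hC, hkey⟩ := phi_key hq (ε := ε₁) hε₁pos
  refine ⟨2 ^ p * (C + 1) ^ p, by positivity, fun a c => ?_⟩
  have hε₁p : ε₁ ^ p = ε / 2 ^ p := by
    have hx : (0:ℝ) ≤ ε / 2 ^ p := by positivity
    rw [hε₁, ← Real.rpow_mul hx, one_div, inv_mul_cancel₀ (ne_of_gt hp0), Real.rpow_one]
  have hg : |phi q a - phi q (a - c) - phi q c| ≤ ε₁ * |a - c| ^ q + (C + 1) * |c| ^ q := by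
    have h0 := hkey (a - c) c
    rw [sub_add_cancel] at h0
    have h1 : |phi q a - phi q (a - c) - phi q c| ≤ |phi q a - phi q (a - c)| + |phi q c| :=
      abs_sub _ _
    have h2 : |phi q c| = |c| ^ q := abs_phi q hq c
    nlinarith [Real.rpow_nonneg (abs_nonneg c) q]
  have habs : |phi q a - phi q (a - c) - phi q c| ^ p
      ≤ (ε₁ * |a - c| ^ q + (C + 1) * |c| ^ q) ^ p :=
    Real.rpow_le_rpow (abs_nonneg _) hg hp0.le
  have hsplit : (ε₁ * |a - c| ^ q + (C + 1) * |c| ^ q) ^ p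
      ≤ 2 ^ p * ((ε₁ * |a - c| ^ q) ^ p + ((C + 1) * |c| ^ q) ^ p) :=
    add_rpow_le hp0.le (by positivity) (by positivity)
  have e1 : (ε₁ * |a - c| ^ q) ^ p = (ε / 2 ^ p) * |a - c| ^ r := by
    rw [Real.mul_rpow hε₁pos.le (by positivity), hε₁p,
      ← Real.rpow_mul (abs_nonneg _)]
    congr 1
    rw [hp, mul_comm]
    rw [div_mul_cancel₀ r (ne_of_gt hq0)]
  have e2 : ((C + 1) * |c| ^ q) ^ p = (C + 1) ^ p * |c| ^ r := by
    rw [Real.mul_rpow (by linarith) (by positivity), ← Real.rpow_mul (abs_nonneg _)]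
    congr 1
    rw [hp, mul_comm]
    rw [div_mul_cancel₀ r (ne_of_gt hq0)]
  calc |phi q a - phi q (a - c) - phi q c| ^ p
      ≤ 2 ^ p * ((ε / 2 ^ p) * |a - c| ^ r + (C + 1) ^ p * |c| ^ r) := by
        rw [← e1, ← e2]; exact habs.trans hsplit
    _ = ε * |a - c| ^ r + (2 ^ p * (C + 1) ^ p) * |c| ^ r := by
        field_simp

end BLaux3

open BLaux BLaux2 BLaux3


open BLaux BLaux2 BLaux3

set_option maxHeartbeats 2000000 in
/-- Local Brezis–Lieb lemma, second form. -/
theorem local_brezis_lieb_second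
    (N : ℕ) (hN : 1 ≤ N) (r q : ℝ) (hr1 : 1 < r) (hq1 : 1 ≤ q) (hqr : q ≤ r)
    (w : ℕ → Sp N → ℝ) (wlim : Sp N → ℝ)
    (hmeas : ∀ n, AEStronglyMeasurable (w n) (volume : Measure (Sp N)))
    (hbdd : ∃ C : ℝ≥0∞, C < ⊤ ∧ ∀ n, eLpNorm (w n) (ENNReal.ofReal r) volume ≤ C)
    (hae : ∀ᵐ x ∂(volume : Measure (Sp N)), Tendsto (fun n => w n x) atTop (nhds (wlim x))) :
    Tendsto
      (fun n => ∫ x,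
        |(|w n x| ^ (q - 1) * w n x
          - |w n x - wlim x| ^ (q - 1) * (w n x - wlim x)
          - |wlim x| ^ (q - 1) * wlim x)| ^ (r / q))
      atTop (nhds 0) := by
  classical
  simp only [show ∀ t : ℝ, |t| ^ (q - 1) * t = phi q t from fun _ => rfl]
  obtain ⟨C, hCtop, hCb⟩ := hbdd
  have hr0 : (0:ℝ) < r := by linarith
  have hq0 : (0:ℝ) < q := by linarith
  have hp0 : (0:ℝ) < r / q := by positivity
  set P : ℝ≥0∞ := ENNReal.ofReal r with hPdef
  have hP0 : P ≠ 0 := by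
    simp only [hPdef, ne_eq, ENNReal.ofReal_eq_zero, not_le]; linarith
  have hPtop : P ≠ ∞ := ENNReal.ofReal_ne_top
  have hPto : P.toReal = r := ENNReal.toReal_ofReal hr0.le
  have hP1 : 1 ≤ P := by
    rw [hPdef, ← ENNReal.ofReal_one]
    exact ENNReal.ofReal_le_ofReal (by linarith)
  have hwm : AEStronglyMeasurable wlim (volume : Measure (Sp N)) :=
    aestronglyMeasurable_of_tendsto_ae atTop hmeas hae
  have hClim : eLpNorm wlim P volume ≤ C := by
    refine (Lp.eLpNorm_lim_le_liminf_eLpNorm hmeas wlim hae).trans ?_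
    refine (Filter.liminf_le_liminf (Eventually.of_forall fun n => hCb n)).trans ?_
    simp
  have hwn : ∀ n, MemLp (w n) P volume := fun n => ⟨hmeas n, lt_of_le_of_lt (hCb n) hCtop⟩
  have hwlim : MemLp wlim P volume := ⟨hwm, lt_of_le_of_lt hClim hCtop⟩
  have hsub : ∀ n, MemLp (fun x => w n x - wlim x) P volume := fun n => (hwn n).sub hwlim
  have hIwlim : Integrable (fun x => |wlim x| ^ r) (volume : Measure (Sp N)) := by
    have := hwlim.integrable_norm_rpow hP0 hPtop
    simpa [hPto, Real.norm_eq_abs] using this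
  have hIsub : ∀ n, Integrable (fun x => |w n x - wlim x| ^ r) (volume : Measure (Sp N)) := by
    intro n
    have := (hsub n).integrable_norm_rpow hP0 hPtop
    simpa [hPto, Real.norm_eq_abs] using this
  -- uniform bound on ∫ |w n - wlim|^r
  have hCCtop : C + C ≠ ∞ := by finiteness
  set K : ℝ := ((C + C).toReal) ^ r with hKdef
  have hK0 : 0 ≤ K := Real.rpow_nonneg ENNReal.toReal_nonneg r
  have hI : ∀ n, (∫ x, |w n x - wlim x| ^ r) ≤ K := by
    intro n
    set I := ∫ x, |w n x - wlim x| ^ r with hIdef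
    have hInn : 0 ≤ I := integral_nonneg fun x => by positivity
    have hsn : eLpNorm (fun x => w n x - wlim x) P volume ≤ C + C := by
      have h := eLpNorm_sub_le (hmeas n) hwm hP1
      exact h.trans (add_le_add (hCb n) hClim)
    have heq := (hsub n).eLpNorm_eq_integral_rpow_norm hP0 hPtop
    rw [heq] at hsn
    have h2 : (∫ x, ‖w n x - wlim x‖ ^ P.toReal) = I := by
      rw [hPto]; simp_rw [Real.norm_eq_abs]; rfl
    rw [h2] at hsn
    have h3 : I ^ (P.toReal)⁻¹ ≤ (C + C).toReal :=
      (ENNReal.ofReal_le_iff_le_toReal hCCtop).1 hsn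
    rw [hPto] at h3
    have h4 : I = (I ^ r⁻¹) ^ r := by
      rw [← Real.rpow_mul hInn, inv_mul_cancel₀ (ne_of_gt hr0), Real.rpow_one]
    rw [h4]
    exact Real.rpow_le_rpow (Real.rpow_nonneg hInn _) h3 hr0.le
  -- continuous maps for measurability
  have contP : Continuous fun s : ℝ => |s| ^ (r / q) :=
    (Real.continuous_rpow_const hp0.le).comp continuous_abs
  have contR : Continuous fun s : ℝ => |s| ^ r :=
    (Real.continuous_rpow_const hr0.le).comp continuous_abs
  have contPhi : Continuous (phi q) := continuous_phi q hq1
  have contG : Continuous (fun z : ℝ × ℝ => phi q z.1 - phi q (z.1 - z.2) - phi q z.2) :=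
    (((contPhi.comp continuous_fst).sub
      (contPhi.comp (continuous_fst.sub continuous_snd))).sub
      (contPhi.comp continuous_snd))
  -- the functions
  set g : ℕ → Sp N → ℝ := fun n x => phi q (w n x) - phi q (w n x - wlim x) - phi q (wlim x)
    with hgdef
  set f : ℕ → Sp N → ℝ := fun n x => |g n x| ^ (r / q) with hfdef
  have hgm : ∀ n, AEStronglyMeasurable (g n) (volume : Measure (Sp N)) := fun n =>
    contG.comp_aestronglyMeasurable ((hmeas n).prodMk hwm)
  have hfm : ∀ n, AEStronglyMeasurable (f n) (volume : Measure (Sp N)) := fun n =>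
    contP.comp_aestronglyMeasurable (hgm n)
  have hhm : ∀ n, AEStronglyMeasurable (fun x => |w n x - wlim x| ^ r)
      (volume : Measure (Sp N)) := fun n =>
    contR.comp_aestronglyMeasurable ((hmeas n).sub hwm)
  -- a.e. convergence of f to 0
  have hf0 : ∀ᵐ x ∂(volume : Measure (Sp N)), Tendsto (fun n => f n x) atTop (𝓝 0) := by
    filter_upwards [hae] with x hx
    have c1 : Tendsto (fun n => phi q (w n x)) atTop (𝓝 (phi q (wlim x))) :=
      (contPhi.tendsto _).comp hx
    have c2 : Tendsto (fun n => phi q (w n x - wlim x)) atTop (𝓝 (phi q (wlim x - wlim x))) :=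
      (contPhi.tendsto _).comp (hx.sub tendsto_const_nhds)
    rw [sub_self] at c2
    have hg0 : Tendsto (fun n => g n x) atTop (𝓝 0) := by
      have h3 : Tendsto (fun _ : ℕ => phi q (wlim x)) atTop (𝓝 (phi q (wlim x))) :=
        tendsto_const_nhds
      have := (c1.sub c2).sub h3
      simpa [phi_zero, hgdef] using this
    have := (contP.tendsto 0).comp hg0
    simpa [hfdef, Real.zero_rpow (ne_of_gt hp0), abs_zero, Function.comp_def] using this
  -- goal restated
  have hgoal : Tendsto (fun n => ∫ x, f n x) atTop (𝓝 0) := by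
    rw [NormedAddCommGroup.tendsto_nhds_zero]
    intro ε hε
    set ε₂ : ℝ := ε / (2 * (K + 1)) with hε₂def
    have hε₂pos : 0 < ε₂ := by positivity
    obtain ⟨D, hD, hdom⟩ := pointwise_dom hq1 hqr hε₂pos
    set G : ℕ → Sp N → ℝ := fun n x => max (f n x - ε₂ * |w n x - wlim x| ^ r) 0 with hGdef
    have hfd : ∀ n x, f n x ≤ ε₂ * |w n x - wlim x| ^ r + D * |wlim x| ^ r := by
      intro n x
      have := hdom (w n x) (wlim x)
      simpa [hfdef, hgdef] using this
    have hGm : ∀ n, AEStronglyMeasurable (G n) (volume : Measure (Sp N)) := fun n =>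
      ((hfm n).sub ((hhm n).const_mul ε₂)).sup aestronglyMeasurable_const
    have hGnn : ∀ n x, 0 ≤ G n x := fun n x => le_max_right _ _
    have hGdom : ∀ n, ∀ᵐ x ∂(volume : Measure (Sp N)), ‖G n x‖ ≤ D * |wlim x| ^ r := by
      intro n
      refine Eventually.of_forall fun x => ?_
      rw [Real.norm_eq_abs, abs_of_nonneg (hGnn n x)]
      apply max_le
      · linarith [hfd n x]
      · positivity
    have hGtend : ∀ᵐ x ∂(volume : Measure (Sp N)),
        Tendsto (fun n => G n x) atTop (𝓝 0) := by
      filter_upwards [hf0] with x hx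
      refine tendsto_of_tendsto_of_tendsto_of_le_of_le tendsto_const_nhds hx
        (fun n => hGnn n x) (fun n => ?_)
      apply max_le _ _
      · have h1 : 0 ≤ ε₂ * |w n x - wlim x| ^ r := by positivity
        linarith
      · exact Real.rpow_nonneg (abs_nonneg _) _
    have hGint : ∀ n, Integrable (G n) (volume : Measure (Sp N)) := fun n =>
      Integrable.mono' (hIwlim.const_mul D) (hGm n) (hGdom n)
    have hGlim : Tendsto (fun n => ∫ x, G n x) atTop (𝓝 0) := by
      have := tendsto_integral_of_dominated_convergence (fun x => D * |wlim x| ^ r)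
        hGm (hIwlim.const_mul D) hGdom hGtend
      simpa using this
    have hsplit : ∀ n, (∫ x, f n x) ≤ (∫ x, G n x) + ε₂ * K := by
      intro n
      have h1 : (∫ x, f n x) ≤ ∫ x, (G n x + ε₂ * |w n x - wlim x| ^ r) := by
        refine integral_mono_of_nonneg (Eventually.of_forall fun x => ?_)
          ((hGint n).add ((hIsub n).const_mul ε₂)) (Eventually.of_forall fun x => ?_)
        · exact Real.rpow_nonneg (abs_nonneg _) _
        · have := le_max_left (f n x - ε₂ * |w n x - wlim x| ^ r) 0
          simp only [hGdef]
          linarith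
      rw [integral_add (hGint n) ((hIsub n).const_mul ε₂), integral_const_mul] at h1
      have h2 : ε₂ * (∫ x, |w n x - wlim x| ^ r) ≤ ε₂ * K :=
        mul_le_mul_of_nonneg_left (hI n) hε₂pos.le
      linarith
    have hε₂K : ε₂ * K ≤ ε / 2 := by
      rw [hε₂def, div_mul_eq_mul_div, div_le_div_iff₀ (by positivity) (by norm_num)]
      nlinarith
    have hev : ∀ᶠ n in atTop, ‖∫ x, G n x‖ < ε / 2 := by
      have := NormedAddCommGroup.tendsto_nhds_zero.1 hGlim
      exact this (ε / 2) (by positivity)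
    filter_upwards [hev] with n hn
    have hfn0 : 0 ≤ ∫ x, f n x := integral_nonneg fun x => Real.rpow_nonneg (abs_nonneg _) _
    rw [Real.norm_eq_abs, abs_of_nonneg hfn0]
    have : (∫ x, G n x) ≤ ‖∫ x, G n x‖ := le_abs_self _
    calc (∫ x, f n x) ≤ (∫ x, G n x) + ε₂ * K := hsplit n
      _ < ε / 2 + ε / 2 := by
          apply add_lt_add_of_lt_of_le _ hε₂K
          exact lt_of_le_of_lt this hn
      _ = ε := by ring
  exact hgoal
end
end
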